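/- Let 0 ≤ r₁ < ρ < r₂ and α ∈ ℂ with |α|^{−1/2} = ρ. Let f be a meromorphic function on the annulus A = {x ∈ ℂ : r₁ < |x| < r₂} of the form f(x) = g(x²) for a meromorphic function g, whose only singularities in A are simple poles at the two points x = ±α^{−1/2} (for some fixed square root α^{−1/2}). Let c_l (l ∈ ℤ) be the coefficients of x^{2l} in the Laurent expansion of f valid on {r₁ < |x| < ρ}, and c'_l those of the Laurent expansion valid on {ρ < |x| < r₂}. Then for every l ∈ ℤ: c'_l − c_l = − α^{l} · [ (1 − α x²) f(x) ] evaluated at x = α^{−1/2} (equivalently, at x² = α^{−1}). -/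

import Mathlib

open Complex Metric Set Real

lemma zpow_two_mul_eq {x : ℂ} (hx : x ≠ 0) (m : ℤ) : x ^ (2 * m) = (x ^ 2) ^ m := by
  lift x to ℂˣ using isUnit_iff_ne_zero.mpr hx
  rw [show ((x : ℂ) ^ 2) = ((x ^ 2 : ℂˣ) : ℂ) by push_cast; ring,
    ← Units.val_zpow_eq_zpow_val, ← Units.val_zpow_eq_zpow_val, zpow_mul]
  rfl

lemma circleInt_of_hasSum (F : ℂ → ℂ) (A : ℤ → ℂ) (t : ℝ) (ht : 0 < t) (l : ℤ)
    (h : ∀ x : ℂ, ‖x‖ = t → HasSum (fun m : ℤ => A m * x ^ (2 * m)) (F x)) :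
    (∮ z in C(0, t), F z * z ^ (-(2 * l) - 1)) = (2 * Real.pi * Complex.I) * A l := by
  have ht' : (t : ℂ) ≠ 0 := by exact_mod_cast ht.ne'
  have hmapne : ∀ θ : ℝ, circleMap 0 t θ ≠ 0 := fun θ => circleMap_ne_center ht.ne'
  have hmapabs : ∀ θ : ℝ, ‖circleMap 0 t θ‖ = t := by
    intro θ; rw [norm_circleMap_zero, abs_of_pos ht]
  -- summability of norms
  have hsum0 : Summable (fun m : ℤ => ‖A m‖ * t ^ (2 * m)) := by
    have h1 := (h (t : ℂ) (by simp [abs_of_pos ht])).summable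
    have h2 := summable_norm_iff.mpr h1
    refine h2.congr fun m => ?_
    rw [norm_mul, norm_zpow, Complex.norm_real, Real.norm_eq_abs, abs_of_pos ht]
  set k : ℤ := -(2 * l) - 1 with hk
  -- the continuous summand functions
  have hcont : ∀ m : ℤ, Continuous fun θ : ℝ =>
      circleMap 0 t θ * Complex.I * (A m * circleMap 0 t θ ^ (2 * m + k)) := by
    intro m
    exact ((continuous_circleMap 0 t).mul continuous_const).mul
      (continuous_const.mul ((continuous_circleMap 0 t).zpow₀ _ fun θ => Or.inl (hmapne θ)))
  set g : ℤ → C(ℝ, ℂ) := fun m => ⟨_, hcont m⟩ with hg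
  set K : TopologicalSpace.Compacts ℝ :=
    ⟨uIcc 0 (2 * Real.pi), isCompact_uIcc⟩ with hK
  have hgnorm : ∀ m θ, ‖g m θ‖ = ‖A m‖ * t ^ (2 * m) * (t * t ^ k) := by
    intro m θ
    simp only [hg, ContinuousMap.coe_mk]
    simp only [norm_mul, norm_zpow, hmapabs, Complex.norm_I]
    rw [zpow_add₀ ht.ne']
    ring
  have hnorms : Summable fun m : ℤ => ‖(g m).restrict K‖ := by
    refine Summable.of_nonneg_of_le (fun _ => norm_nonneg _) (fun m => ?_)
      (hsum0.mul_right (t * t ^ k))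
    refine ContinuousMap.norm_le _ (by positivity) |>.mpr fun x => ?_
    rw [ContinuousMap.restrict_apply]
    exact le_of_eq (hgnorm m x)
  have H := intervalIntegral.hasSum_intervalIntegral_of_summable_norm (a := 0) (b := 2 * Real.pi) hnorms
  -- identify the total integral
  have htot : (∫ θ in (0:ℝ)..2 * Real.pi, ∑' m : ℤ, g m θ)
      = ∮ z in C(0, t), F z * z ^ k := by
    rw [circleIntegral]
    refine intervalIntegral.integral_congr fun θ _ => ?_
    have hz := hmapne θ
    have hS : HasSum (fun m : ℤ => circleMap 0 t θ * Complex.I *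
        (A m * circleMap 0 t θ ^ (2 * m + k)))
        (circleMap 0 t θ * Complex.I * (F (circleMap 0 t θ) * circleMap 0 t θ ^ k)) := by
      refine HasSum.mul_left _ ?_
      have := (h (circleMap 0 t θ) (hmapabs θ)).mul_right (circleMap 0 t θ ^ k)
      refine this.congr_fun fun m => ?_
      rw [mul_assoc, ← zpow_add₀ hz]
    simp only [hg, ContinuousMap.coe_mk]
    rw [hS.tsum_eq, deriv_circleMap, smul_eq_mul]
  -- identify each term
  have hterm : ∀ m : ℤ, (∫ θ in (0:ℝ)..2 * Real.pi, g m θ)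
      = (if m = l then (2 * Real.pi * Complex.I) * A l else 0) := by
    intro m
    have hre : (∫ θ in (0:ℝ)..2 * Real.pi, g m θ)
        = A m * ∮ z in C(0, t), (z - 0) ^ (2 * m + k) := by
      rw [circleIntegral, ← intervalIntegral.integral_const_mul]
      refine intervalIntegral.integral_congr fun θ _ => ?_
      simp only [hg, ContinuousMap.coe_mk, deriv_circleMap, smul_eq_mul, sub_zero]
      ring
    by_cases hm : m = l
    · subst hm
      have : 2 * m + k = -1 := by omega
      rw [hre, this]
      rw [show ((-1 : ℤ)) = -(1:ℤ) from rfl]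
      simp only [zpow_neg, zpow_one]
      rw [circleIntegral.integral_sub_inv_of_mem_ball (mem_ball_self ht)]
      simp only [if_true]; ring
    · rw [hre, circleIntegral.integral_sub_zpow_of_ne (by omega) 0 0 t, mul_zero, if_neg hm]
  have H2 : HasSum (fun m : ℤ => ∫ θ in (0:ℝ)..2 * Real.pi, g m θ)
      ((2 * Real.pi * Complex.I) * A l) := by
    refine HasSum.congr_fun ?_ fun m => hterm m
    exact hasSum_ite_eq l _
  rw [← htot]
  exact H.unique H2

lemma geom_inner {α x : ℂ} (hx : x ≠ 0) (h : ‖α * x ^ 2‖ < 1) :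
    HasSum (fun m : ℤ => (if 0 ≤ m then α ^ m else 0) * x ^ (2 * m)) ((1 - α * x ^ 2)⁻¹) := by
  have hg := hasSum_geometric_of_norm_lt_one (ξ := α * x ^ 2) (by exact h)
  refine (Function.Injective.hasSum_iff (fun a b hab => by exact_mod_cast hab : Function.Injective ((↑) : ℕ → ℤ)) ?_).mp ?_
  · intro m hm
    have : m < 0 := by
      rcases lt_or_ge m 0 with h' | h'
      · exact h'
      · exact absurd ⟨m.toNat, by omega⟩ hm
    rw [if_neg (by omega), zero_mul]
  · refine hg.congr_fun fun n => ?_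
    simp only [Function.comp_apply]
    rw [if_pos (by positivity), zpow_two_mul_eq hx, zpow_natCast, zpow_natCast, ← mul_pow]

lemma geom_outer {α x : ℂ} (hα : α ≠ 0) (hx : x ≠ 0) (h : 1 < ‖α * x ^ 2‖) :
    HasSum (fun m : ℤ => (if m < 0 then -α ^ m else 0) * x ^ (2 * m)) ((1 - α * x ^ 2)⁻¹) := by
  set u := α * x ^ 2 with hu
  have hu0 : u ≠ 0 := mul_ne_zero hα (pow_ne_zero 2 hx)
  have hinv : ‖u⁻¹‖ < 1 := by
    rw [norm_inv]
    rw [inv_lt_one_iff₀]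
    right; exact h
  have hg := (hasSum_geometric_of_norm_lt_one (ξ := u⁻¹)
    (by exact hinv)).mul_left (-u⁻¹)
  have hu1 : (1 : ℂ) - u ≠ 0 := by
    intro hE
    have : u = 1 := by linear_combination -hE
    rw [this] at h; simp at h
  have hui1 : (1 : ℂ) - u⁻¹ ≠ 0 := by
    intro hE
    have : u⁻¹ = 1 := by linear_combination -hE
    rw [this] at hinv; simp at hinv
  have hval : -u⁻¹ * (1 - u⁻¹)⁻¹ = (1 - u)⁻¹ := by
    field_simp
    rw [← neg_div, div_eq_one_iff_eq (by intro hE; exact hu1 (by linear_combination -hE))]; ring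
  rw [hval] at hg
  refine (Function.Injective.hasSum_iff
    (g := fun n : ℕ => (-(n + 1) : ℤ)) (fun a b hab => by simpa using hab) ?_).mp ?_
  · intro m hm
    have : 0 ≤ m := by
      rcases lt_or_ge m 0 with h' | h'
      · exact absurd ⟨(-m - 1).toNat, by simp; omega⟩ hm
      · exact h'
    rw [if_neg (by omega), zero_mul]
  · refine hg.congr_fun fun n => ?_
    simp only [Function.comp_apply]
    rw [if_pos (by omega), zpow_two_mul_eq hx, neg_mul, ← mul_zpow, ← hu]
    rw [show (-(n + 1) : ℤ) = -((n + 1 : ℕ) : ℤ) by push_cast; ring, zpow_neg, zpow_natCast,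
      inv_pow, pow_succ']
    ring

theorem stmt18 (r₁ ρ r₂ : ℝ) (h0 : 0 ≤ r₁) (h1 : r₁ < ρ) (h2 : ρ < r₂)
    (α : ℂ) (hα : ‖α‖ ^ (-(1 : ℝ) / 2) = ρ)
    (f G : ℂ → ℂ)
    (hG : AnalyticOnNhd ℂ G {w : ℂ | r₁ ^ 2 < ‖w‖ ∧ ‖w‖ < r₂ ^ 2})
    (hf : ∀ x : ℂ, r₁ < ‖x‖ → ‖x‖ < r₂ → x ^ 2 ≠ α⁻¹ →
      f x = G (x ^ 2) / (1 - α * x ^ 2))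
    (c c' : ℤ → ℂ)
    (hc : ∀ x : ℂ, r₁ < ‖x‖ → ‖x‖ < ρ →
      HasSum (fun l : ℤ => c l * x ^ (2 * l)) (f x))
    (hc' : ∀ x : ℂ, ρ < ‖x‖ → ‖x‖ < r₂ →
      HasSum (fun l : ℤ => c' l * x ^ (2 * l)) (f x))
    (l : ℤ) :
    c' l - c l = -α ^ l * G α⁻¹ := by
  have hρ : 0 < ρ := lt_of_le_of_lt h0 h1
  have hα0 : α ≠ 0 := by
    intro hE
    rw [hE] at hα
    rw [norm_zero, Real.zero_rpow (by norm_num : (-(1 : ℝ) / 2) ≠ 0)] at hα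
    linarith
  have habs : ‖α⁻¹‖ = ρ ^ 2 := by
    have hαpos : 0 < ‖α‖ := norm_pos_iff.mpr hα0
    have key : (‖α‖ ^ (-(1 : ℝ) / 2)) ^ (2 : ℕ) = ‖α⁻¹‖ := by
      rw [← Real.rpow_natCast (‖α‖ ^ (-(1 : ℝ) / 2)) 2,
        ← Real.rpow_mul hαpos.le]
      norm_num
      exact Real.rpow_neg_one _
    rw [← key, hα]
  have hαv : ‖α‖ = (ρ ^ 2)⁻¹ := by rw [← habs, norm_inv, inv_inv]
  set S : Set ℂ := {w : ℂ | r₁ ^ 2 < ‖w‖ ∧ ‖w‖ < r₂ ^ 2} with hS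
  have hSopen : IsOpen S := by
    have : S = (‖·‖) ⁻¹' (Ioo (r₁ ^ 2) (r₂ ^ 2)) := rfl
    rw [this]
    exact isOpen_Ioo.preimage continuous_norm
  have haS : α⁻¹ ∈ S := by
    constructor <;> rw [habs]
    · exact pow_lt_pow_left₀ h1 h0 two_ne_zero
    · exact pow_lt_pow_left₀ h2 hρ.le two_ne_zero
  have hGd : DifferentiableOn ℂ G S := hG.differentiableOn
  have hdsl : DifferentiableOn ℂ (dslope G α⁻¹) S :=
    (differentiableOn_dslope (hSopen.mem_nhds haS)).mpr hGd
  set F : ℂ → ℂ := fun x => -α⁻¹ * dslope G α⁻¹ (x ^ 2) with hF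
  -- membership of x^2 in S
  have hx2S : ∀ x : ℂ, r₁ < ‖x‖ → ‖x‖ < r₂ → x ^ 2 ∈ S := by
    intro x hx1 hx2
    constructor <;> rw [norm_pow]
    · exact pow_lt_pow_left₀ hx1 h0 two_ne_zero
    · exact pow_lt_pow_left₀ hx2 (norm_nonneg _) two_ne_zero
  -- split  f = F + G α⁻¹ / (1 - α x²)
  have hsplit : ∀ x : ℂ, r₁ < ‖x‖ → ‖x‖ < r₂ → x ^ 2 ≠ α⁻¹ →
      f x - G α⁻¹ * (1 - α * x ^ 2)⁻¹ = F x := by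
    intro x hx1 hx2 hne
    have h12 : 1 - α * x ^ 2 ≠ 0 := by
      intro hE
      exact hne (eq_inv_of_mul_eq_one_left (by linear_combination -hE))
    have hsub : x ^ 2 - α⁻¹ ≠ 0 := sub_ne_zero.mpr hne
    have hsub' : α⁻¹ - x ^ 2 ≠ 0 := sub_ne_zero.mpr fun e => hne e.symm
    rw [hf x hx1 hx2 hne]
    show _ = -α⁻¹ * dslope G α⁻¹ (x ^ 2)
    rw [dslope_of_ne G hne, slope_def_field]
    have hden : x ^ 2 * α ^ 2 - α ≠ 0 := by
      have e : x ^ 2 * α ^ 2 - α = -α * (1 - α * x ^ 2) := by ring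
      rw [e]
      exact mul_ne_zero (neg_ne_zero.mpr hα0) h12
    set Ga := G α⁻¹ with hGa
    set Gx := G (x ^ 2) with hGx
    field_simp [hα0, h12, hsub', hden]
    linear_combination (Ga - Gx) * mul_inv_cancel₀ (show -1 + α * x ^ 2 ≠ 0 from fun hE => h12 (by linear_combination -hE))
  -- radii
  set t : ℝ := (r₁ + ρ) / 2 with htdef
  set T : ℝ := (ρ + r₂) / 2 with hTdef
  have ht0 : 0 < t := by simp only [htdef]; linarith
  have htr : r₁ < t := by simp only [htdef]; linarith
  have htρ : t < ρ := by simp only [htdef]; linarith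
  have hTρ : ρ < T := by simp only [hTdef]; linarith
  have hTr : T < r₂ := by simp only [hTdef]; linarith
  have hT0 : 0 < T := lt_trans hρ hTρ
  have htT : t ≤ T := by linarith
  -- coefficient sequences for F
  set A : ℤ → ℂ := fun m => c m - G α⁻¹ * (if 0 ≤ m then α ^ m else 0) with hA
  set A' : ℤ → ℂ := fun m => c' m - G α⁻¹ * (if m < 0 then -α ^ m else 0) with hA'
  have hAsum : ∀ x : ℂ, ‖x‖ = t → HasSum (fun m : ℤ => A m * x ^ (2 * m)) (F x) := by
    intro x hxt
    have hx1 : r₁ < ‖x‖ := by rw [hxt]; exact htr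
    have hx2 : ‖x‖ < ρ := by rw [hxt]; exact htρ
    have hx0 : x ≠ 0 := by
      intro e; rw [e, norm_zero] at hxt; linarith
    have hρ2 : (0 : ℝ) < ρ ^ 2 := by positivity
    have hlt : ‖α * x ^ 2‖ < 1 := by
      rw [norm_mul, norm_pow, hαv, hxt]
      have h' : t ^ 2 < ρ ^ 2 := pow_lt_pow_left₀ htρ ht0.le two_ne_zero
      calc (ρ ^ 2)⁻¹ * t ^ 2 < (ρ ^ 2)⁻¹ * ρ ^ 2 :=
            mul_lt_mul_of_pos_left h' (inv_pos.mpr hρ2)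
        _ = 1 := inv_mul_cancel₀ hρ2.ne'
    have hne : x ^ 2 ≠ α⁻¹ := by
      intro e
      have he : ‖x ^ 2‖ = ρ ^ 2 := by rw [e, habs]
      rw [norm_pow, hxt] at he
      nlinarith
    have h3 := (hc x hx1 hx2).sub ((geom_inner hx0 hlt).mul_left (G α⁻¹))
    rw [hsplit x hx1 (lt_trans hx2 h2) hne] at h3
    refine h3.congr_fun fun m => ?_
    simp only [hA]
    ring
  have hA'sum : ∀ x : ℂ, ‖x‖ = T → HasSum (fun m : ℤ => A' m * x ^ (2 * m)) (F x) := by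
    intro x hxT
    have hx1 : ρ < ‖x‖ := by rw [hxT]; exact hTρ
    have hx2 : ‖x‖ < r₂ := by rw [hxT]; exact hTr
    have hx0 : x ≠ 0 := by
      intro e; rw [e, norm_zero] at hxT; linarith
    have hρ2 : (0 : ℝ) < ρ ^ 2 := by positivity
    have hgt : 1 < ‖α * x ^ 2‖ := by
      rw [norm_mul, norm_pow, hαv, hxT]
      have h' : ρ ^ 2 < T ^ 2 := pow_lt_pow_left₀ hTρ hρ.le two_ne_zero
      calc (1 : ℝ) = (ρ ^ 2)⁻¹ * ρ ^ 2 := (inv_mul_cancel₀ hρ2.ne').symm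
        _ < (ρ ^ 2)⁻¹ * T ^ 2 := mul_lt_mul_of_pos_left h' (inv_pos.mpr hρ2)
    have hne : x ^ 2 ≠ α⁻¹ := by
      intro e
      have he : ‖x ^ 2‖ = ρ ^ 2 := by rw [e, habs]
      rw [norm_pow, hxT] at he
      nlinarith
    have h3 := (hc' x hx1 hx2).sub ((geom_outer hα0 hx0 hgt).mul_left (G α⁻¹))
    rw [hsplit x (lt_trans h1 hx1) hx2 hne] at h3
    refine h3.congr_fun fun m => ?_
    simp only [hA']
    ring
  have hInt1 := circleInt_of_hasSum F A t ht0 l hAsum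
  have hInt2 := circleInt_of_hasSum F A' T hT0 l hA'sum
  -- differentiability of the integrand on the annulus
  have hFd : ∀ z : ℂ, r₁ < ‖z‖ → ‖z‖ < r₂ →
      DifferentiableAt ℂ (fun z => F z * z ^ (-(2 * l) - 1)) z := by
    intro z hz1 hz2
    have hz0 : z ≠ 0 := by
      intro e; rw [e, norm_zero] at hz1; linarith
    have hd1 : DifferentiableAt ℂ (dslope G α⁻¹) (z ^ 2) :=
      hdsl.differentiableAt (hSopen.mem_nhds (hx2S z hz1 hz2))
    have hd2 : DifferentiableAt ℂ (fun z : ℂ => z ^ 2) z := differentiableAt_pow 2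
    have hd3 : DifferentiableAt ℂ F z := ((hd1.comp z hd2).const_mul _)
    exact hd3.mul (differentiableAt_zpow.mpr (Or.inl hz0))
  -- Cauchy's theorem on the annulus
  have hEq : (∮ z in C(0, T), F z * z ^ (-(2 * l) - 1))
      = ∮ z in C(0, t), F z * z ^ (-(2 * l) - 1) := by
    refine circleIntegral_eq_of_differentiable_on_annulus_off_countable ht0 htT
      countable_empty ?_ ?_
    · intro z hz
      obtain ⟨hz1, hz2⟩ := hz
      rw [mem_closedBall_zero_iff] at hz1
      rw [mem_ball_zero_iff, not_lt] at hz2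
      exact (hFd z (by linarith) (by linarith)).continuousAt.continuousWithinAt
    · intro z hz
      obtain ⟨⟨hz1, hz2⟩, -⟩ := hz
      rw [mem_ball_zero_iff] at hz1
      rw [mem_closedBall_zero_iff, not_le] at hz2
      exact hFd z (by linarith) (by linarith)
  have hAA : A l = A' l :=
    mul_left_cancel₀ Complex.two_pi_I_ne_zero (by rw [← hInt1, ← hInt2, hEq])
  simp only [hA, hA'] at hAA
  by_cases hl : 0 ≤ l
  · rw [if_pos hl, if_neg (by omega)] at hAA
    linear_combination -hAA
  · rw [if_neg hl, if_pos (by omega)] at hAA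
    linear_combination -hAA
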